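/- Let n ≥ 1 be a natural number, q > 1 a real number, and β₀ ∈ (0, 1). Define a sequence β : ℕ → ℝ by β 0 = β₀ and β (N+1) = (β N)^q / 2. Then there exists N₀ such that for all N ≥ N₀, Real.exp (−(N : ℝ)^(1/(n:ℝ))) * β N ≥ β (N+1) / 2. (That is, for a polynomial-type transversality function t(β) = β^q/2 with q > 1, the globalization inequality exp(−N^{1/n}) · β_N < β_{N+1}/2 required by Donaldson's patching argument eventually fails, since β_N decays doubly exponentially while exp(−N^{1/n}) decays only subexponentially.) -/

import Mathlib

/-- For a polynomial-type transversality function `t(β) = β^q / 2` with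
`q > 1`, the globalization inequality `exp(−N^{1/n}) · β_N < β_{N+1}/2`
required by Donaldson's patching argument eventually fails: the sequence
defined by `β 0 = β₀ ∈ (0,1)`, `β (N+1) = (β N)^q / 2` satisfies
`exp(−N^{1/n}) · β_N ≥ β_{N+1}/2` for all large `N`. -/
theorem polynomial_transversality_fails_globalization
    (n : ℕ) (hn : 1 ≤ n) (q : ℝ) (hq : 1 < q)
    (β₀ : ℝ) (hβ₀ : 0 < β₀) (hβ₀1 : β₀ < 1)
    (β : ℕ → ℝ) (h0 : β 0 = β₀)
    (hrec : ∀ N : ℕ, β (N + 1) = β N ^ q / 2) :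
    ∃ N₀ : ℕ, ∀ N ≥ N₀,
      β (N + 1) / 2 ≤ Real.exp (-(N : ℝ) ^ (1 / (n : ℝ))) * β N := by
  have hq0 : 0 < q := lt_trans one_pos hq
  -- positivity of the sequence
  have hpos : ∀ N, 0 < β N := by
    intro N
    induction N with
    | zero => rw [h0]; exact hβ₀
    | succ k ih =>
      rw [hrec k]
      positivity
  -- double-exponential bound
  have hbound : ∀ N, β N ≤ β₀ ^ ((q ^ N : ℝ)) := by
    intro N
    induction N with
    | zero => simp [h0]
    | succ k ih =>
      rw [hrec k]
      calc β k ^ q / 2 ≤ β k ^ q := by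
            have : 0 < β k ^ q := Real.rpow_pos_of_pos (hpos k) q
            linarith
        _ ≤ (β₀ ^ (q ^ k : ℝ)) ^ q := Real.rpow_le_rpow (hpos k).le ih hq0.le
        _ = β₀ ^ ((q ^ (k + 1) : ℝ)) := by
            rw [← Real.rpow_mul hβ₀.le, ← pow_succ]
  set c : ℝ := -Real.log β₀ with hc
  have hcpos : 0 < c := by
    have := Real.log_neg hβ₀ hβ₀1
    simp [hc]; linarith
  -- eventually N ≤ c (q-1) q^N
  have htend := tendsto_pow_const_div_const_pow_of_one_lt 1 hq
  have hev : ∀ᶠ N : ℕ in Filter.atTop, (N : ℝ) ≤ c * (q - 1) * q ^ N := by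
    have hpos' : 0 < c * (q - 1) := by nlinarith
    filter_upwards [htend.eventually (gt_mem_nhds hpos')] with N hN
    have hqN : 0 < (q : ℝ) ^ N := pow_pos hq0 N
    rw [pow_one] at hN
    rw [div_lt_iff₀ hqN] at hN
    linarith
  obtain ⟨N₀, hN₀⟩ := Filter.eventually_atTop.mp hev
  refine ⟨N₀, fun N hN => ?_⟩
  have hβN := hpos N
  -- reduce to β N ^ (q-1) ≤ exp (-N^{1/n})
  have key : β N ^ (q - 1) ≤ Real.exp (-(N : ℝ) ^ (1 / (n : ℝ))) := by
    have h1 : β N ^ (q - 1) ≤ β₀ ^ ((q ^ N : ℝ) * (q - 1)) := by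
      calc β N ^ (q - 1) ≤ (β₀ ^ (q ^ N : ℝ)) ^ (q - 1) :=
            Real.rpow_le_rpow hβN.le (hbound N) (by linarith)
        _ = β₀ ^ ((q ^ N : ℝ) * (q - 1)) := (Real.rpow_mul hβ₀.le _ _).symm
    have h2 : β₀ ^ ((q ^ N : ℝ) * (q - 1)) =
        Real.exp (-(c * (q - 1) * q ^ N)) := by
      rw [Real.rpow_def_of_pos hβ₀]
      rw [hc]
      ring_nf
    have h3 : (N : ℝ) ^ (1 / (n : ℝ)) ≤ c * (q - 1) * q ^ N := by
      have hNle : (N : ℝ) ^ (1 / (n : ℝ)) ≤ (N : ℝ) := by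
        rcases Nat.eq_zero_or_pos N with h | h
        · subst h
          have h1n : (1:ℝ) ≤ (n:ℝ) := by exact_mod_cast hn
          rw [Nat.cast_zero, Real.zero_rpow (by positivity)]
        · have h1N : (1:ℝ) ≤ (N:ℝ) := by exact_mod_cast h
          have hinv : 1 / (n : ℝ) ≤ 1 := by
            have : (1:ℝ) ≤ (n:ℝ) := by exact_mod_cast hn
            rw [div_le_one (by linarith)]; exact this
          calc (N : ℝ) ^ (1 / (n : ℝ)) ≤ (N : ℝ) ^ (1 : ℝ) :=
                Real.rpow_le_rpow_of_exponent_le h1N hinv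
            _ = (N : ℝ) := Real.rpow_one _
      exact hNle.trans (hN₀ N hN)
    calc β N ^ (q - 1) ≤ Real.exp (-(c * (q - 1) * q ^ N)) := h2 ▸ h1
      _ ≤ Real.exp (-(N : ℝ) ^ (1 / (n : ℝ))) := Real.exp_le_exp.mpr (by linarith)
  -- finish
  rw [hrec N]
  have hsplit : β N ^ q = β N ^ (q - 1) * β N := by
    nth_rewrite 3 [← Real.rpow_one (β N)]
    rw [← Real.rpow_add hβN]
    ring_nf
  rw [hsplit]
  have : β N ^ (q - 1) * β N ≤ Real.exp (-(N : ℝ) ^ (1 / (n : ℝ))) * β N :=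
    mul_le_mul_of_nonneg_right key hβN.le
  have hp : 0 < β N ^ (q - 1) * β N := by positivity
  linarith
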